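/- Let n ≥ 1 and let K = ℚ(X_1, …, X_{n+1}) be the field of rational functions in n+1 variables over ℚ. Define the n×n tridiagonal matrix h over K by h_{ii} = (1 − X_i X_{i+1}) / ((1 − X_i)(1 − X_{i+1})) for 1 ≤ i ≤ n, h_{i,i+1} = −1/(1 − X_{i+1}) for 1 ≤ i ≤ n−1, h_{i+1,i} = X_{i+1}/(X_{i+1} − 1) for 1 ≤ i ≤ n−1, and h_{ij} = 0 when |i − j| ≥ 2. Then det h = (1 − X_1 X_2 ⋯ X_{n+1}) / ((1 − X_1)(1 − X_2) ⋯ (1 − X_{n+1})). In particular, for every 1 ≤ j ≤ n, the j-th leading principal minor of h equals (1 − X_1 ⋯ X_{j+1}) / ((1 − X_1) ⋯ (1 − X_{j+1})). -/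

import Mathlib

open Matrix

/-- The tridiagonal matrix `h` attached to the variables `x 0, …, x n`. -/
noncomputable def gassnerMatrix {n : ℕ} (K : Type*) [Field K] (x : Fin (n + 1) → K) :
    Matrix (Fin n) (Fin n) K :=
  Matrix.of fun i j =>
    if i = j then
      (1 - x i.castSucc * x i.succ) / ((1 - x i.castSucc) * (1 - x i.succ))
    else if (j : ℕ) = (i : ℕ) + 1 then
      -1 / (1 - x j.castSucc)
    else if (i : ℕ) = (j : ℕ) + 1 then
      x i.castSucc / (x i.castSucc - 1)
    else 0

noncomputable def gg {K : Type*} [Field K] (x : ℕ → K) (m : ℕ) : Matrix (Fin m) (Fin m) K :=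
  fun i j =>
    if (i : ℕ) = (j : ℕ) then
      (1 - x i * x (i + 1)) / ((1 - x i) * (1 - x (i + 1)))
    else if (j : ℕ) = (i : ℕ) + 1 then
      -1 / (1 - x j)
    else if (i : ℕ) = (j : ℕ) + 1 then
      x i / (x i - 1)
    else 0

lemma gg_apply_nat {K : Type*} [Field K] (x : ℕ → K) (m : ℕ) (i j : Fin m) :
    gg x m i j =
    (if (i : ℕ) = (j : ℕ) then (1 - x i * x (i + 1)) / ((1 - x i) * (1 - x (i + 1)))
     else if (j : ℕ) = (i : ℕ) + 1 then -1 / (1 - x j)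
     else if (i : ℕ) = (j : ℕ) + 1 then x i / (x i - 1) else 0) := rfl

lemma gg_eq_of_val {K : Type*} [Field K] (x : ℕ → K) {m m' : ℕ} (i j : Fin m) (i' j' : Fin m')
    (hi : (i : ℕ) = i') (hj : (j : ℕ) = j') : gg x m i j = gg x m' i' j' := by
  rw [gg_apply_nat, gg_apply_nat, hi, hj]

lemma val_succAbove_k {k : ℕ} (j : Fin (k+1)) :
    (((⟨k, by omega⟩ : Fin (k+2)).succAbove j) : ℕ) =
      if (j : ℕ) < k then (j : ℕ) else (j : ℕ) + 1 := by
  rw [Fin.succAbove]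
  split_ifs with h1 h2 h2
  · simp
  · exact absurd (by simpa [Fin.lt_def] using h1) h2
  · exact absurd (by simpa [Fin.lt_def] using h2) h1
  · simp

lemma ggB_det {K : Type*} [Field K] (x : ℕ → K) (k : ℕ) :
    ((gg x (k+2)).submatrix (Fin.last (k+1)).succAbove
      ((⟨k, by omega⟩ : Fin (k+2)).succAbove)).det = (-1 / (1 - x (k+1))) * (gg x k).det := by
  set B := (gg x (k+2)).submatrix (Fin.last (k+1)).succAbove
      ((⟨k, by omega⟩ : Fin (k+2)).succAbove) with hB
  rw [Matrix.det_succ_column B (Fin.last k)]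
  rw [Finset.sum_eq_single (Fin.last k)]
  · have hent : B (Fin.last k) (Fin.last k) = -1 / (1 - x (k+1)) := by
      rw [hB, Matrix.submatrix_apply, Fin.succAbove_last, gg_apply_nat]
      have h1 : ((Fin.castSucc (Fin.last k)) : ℕ) = k := by simp
      have h2 : (((⟨k, by omega⟩ : Fin (k+2)).succAbove (Fin.last k)) : ℕ) = k + 1 := by
        rw [val_succAbove_k]; simp
      rw [h1, h2, if_neg (by omega), if_pos rfl]
    have hmin : B.submatrix (Fin.last k).succAbove (Fin.last k).succAbove = gg x k := by
      ext i j
      rw [Fin.succAbove_last, Matrix.submatrix_apply, hB, Matrix.submatrix_apply,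
        Fin.succAbove_last]
      refine gg_eq_of_val x _ _ _ _ (by simp) ?_
      rw [val_succAbove_k]
      simp [j.isLt]
    rw [hent, hmin, Fin.val_last, Even.neg_one_pow ⟨k, rfl⟩, one_mul]
  · intro i _ hi
    have hiv : (i : ℕ) ≠ k := fun h => hi (Fin.ext (by simp [h]))
    have hent : B i (Fin.last k) = 0 := by
      rw [hB, Matrix.submatrix_apply, Fin.succAbove_last, gg_apply_nat]
      have h2 : (((⟨k, by omega⟩ : Fin (k+2)).succAbove (Fin.last k)) : ℕ) = k + 1 := by
        rw [val_succAbove_k]; simp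
      have h1 : ((Fin.castSucc i) : ℕ) = (i : ℕ) := by simp
      rw [h1, h2, if_neg (by omega), if_neg (by omega), if_neg (by omega)]
    rw [hent]; ring
  · simp

lemma gg_det {K : Type*} [Field K] (x : ℕ → K) (hx : ∀ i, x i ≠ 1) :
    ∀ m, (gg x m).det =
      (1 - ∏ i ∈ Finset.range (m + 1), x i) / ∏ i ∈ Finset.range (m + 1), (1 - x i) := by
  have hx' : ∀ i, (1 : K) - x i ≠ 0 := fun i => sub_ne_zero.2 fun h => hx i h.symm
  intro m
  induction m using Nat.strong_induction_on with
  | _ m ih =>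
  match m with
  | 0 => simp [Matrix.det_fin_zero, div_self (hx' 0)]
  | 1 =>
      rw [Matrix.det_fin_one]
      simp [gg, Finset.prod_range_succ]
  | (k + 2) =>
    have ih0 := ih k (by omega)
    have ih1 := ih (k+1) (by omega)
    set A := gg x (k+2) with hA
    rw [Matrix.det_succ_row A (Fin.last (k+1))]
    have hpair : ((⟨k, by omega⟩ : Fin (k+2)) : Fin (k+2)) ≠ Fin.last (k+1) := by
      simp [Fin.ext_iff]
    rw [← Finset.sum_subset (Finset.subset_univ {(⟨k, by omega⟩ : Fin (k+2)), Fin.last (k+1)})]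
    · rw [Finset.sum_pair hpair]
      have e1 : A (Fin.last (k+1)) ⟨k, by omega⟩ = x (k+1) / (x (k+1) - 1) := by
        rw [hA, gg_apply_nat]
        rw [if_neg (by simp), if_neg (by simp; omega), if_pos (by simp)]
        simp
      have e2 : A (Fin.last (k+1)) (Fin.last (k+1)) =
          (1 - x (k+1) * x (k+2)) / ((1 - x (k+1)) * (1 - x (k+2))) := by
        rw [hA, gg_apply_nat]
        rw [if_pos rfl]
        norm_num
      have hm1 : A.submatrix (Fin.last (k+1)).succAbove (Fin.last (k+1)).succAbove
          = gg x (k+1) := by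
        ext i j
        rw [Fin.succAbove_last, Matrix.submatrix_apply]
        exact gg_eq_of_val x _ _ _ _ (by simp) (by simp)
      have hm2 := ggB_det x k
      have hP1 : ∏ i ∈ Finset.range (k+1+1), x i
          = (∏ i ∈ Finset.range (k+1), x i) * x (k+1) := Finset.prod_range_succ _ _
      have hQ1 : ∏ i ∈ Finset.range (k+1+1), (1 - x i)
          = (∏ i ∈ Finset.range (k+1), (1 - x i)) * (1 - x (k+1)) := Finset.prod_range_succ _ _
      have hP2 : ∏ i ∈ Finset.range (k+2+1), x i
          = (∏ i ∈ Finset.range (k+1), x i) * x (k+1) * x (k+2) := by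
        rw [Finset.prod_range_succ, Finset.prod_range_succ]
      have hQ2 : ∏ i ∈ Finset.range (k+2+1), (1 - x i)
          = (∏ i ∈ Finset.range (k+1), (1 - x i)) * (1 - x (k+1)) * (1 - x (k+2)) := by
        rw [Finset.prod_range_succ, Finset.prod_range_succ]
      rw [hP1, hQ1] at ih1
      rw [e1, e2, hm1, hm2, ih0, ih1, hP2, hQ2]
      simp only [Fin.val_last]
      have hs1 : ((-1 : K)) ^ (k + 1 + k) = -1 := Odd.neg_one_pow ⟨k, by ring⟩
      have hs2 : ((-1 : K)) ^ (k + 1 + (k + 1)) = 1 := Even.neg_one_pow ⟨k + 1, rfl⟩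
      rw [hs1, hs2, one_mul]
      have hD : (∏ i ∈ Finset.range (k+1), (1 - x i)) ≠ 0 :=
        Finset.prod_ne_zero_iff.2 fun i _ => hx' i
      have h1 : (1:K) - x (k+1) ≠ 0 := hx' (k+1)
      have h2 : (1:K) - x (k+2) ≠ 0 := hx' (k+2)
      have h3 : x (k+1) - 1 ≠ 0 := fun h => h1 (by linear_combination -h)
      set P := ∏ i ∈ Finset.range (k+1), x i
      set D := ∏ i ∈ Finset.range (k+1), (1 - x i)
      field_simp
      ring
    · intro j _ hj
      have h1 : (j : ℕ) ≠ k ∧ (j : ℕ) ≠ k + 1 := by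
        constructor <;> intro h <;> apply hj <;> simp [Fin.ext_iff, h]
      have hz : A (Fin.last (k+1)) j = 0 := by
        rw [hA, gg_apply_nat]
        rw [if_neg, if_neg, if_neg] <;> simp [Fin.val_last] <;> omega
      simp [hz]


set_option maxHeartbeats 1000000

open Finset in
open MvPolynomial in
theorem det_gassnerMatrix (n : ℕ) (hn : 1 ≤ n) :
    (gassnerMatrix (FractionRing (MvPolynomial (Fin (n + 1)) ℚ))
        (fun i => algebraMap (MvPolynomial (Fin (n + 1)) ℚ)
          (FractionRing (MvPolynomial (Fin (n + 1)) ℚ)) (MvPolynomial.X i))).det =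
      (1 - ∏ i, algebraMap (MvPolynomial (Fin (n + 1)) ℚ)
          (FractionRing (MvPolynomial (Fin (n + 1)) ℚ)) (MvPolynomial.X i)) /
      (∏ i, (1 - algebraMap (MvPolynomial (Fin (n + 1)) ℚ)
          (FractionRing (MvPolynomial (Fin (n + 1)) ℚ)) (MvPolynomial.X i))) ∧
    ∀ j (hj1 : 1 ≤ j) (hj2 : j ≤ n),
      ((gassnerMatrix (FractionRing (MvPolynomial (Fin (n + 1)) ℚ))
          (fun i => algebraMap (MvPolynomial (Fin (n + 1)) ℚ)
            (FractionRing (MvPolynomial (Fin (n + 1)) ℚ)) (MvPolynomial.X i))).submatrix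
          (Fin.castLE hj2) (Fin.castLE hj2)).det =
        (1 - ∏ i : Fin (j + 1), algebraMap (MvPolynomial (Fin (n + 1)) ℚ)
            (FractionRing (MvPolynomial (Fin (n + 1)) ℚ))
            (MvPolynomial.X (Fin.castLE (by omega) i))) /
        (∏ i : Fin (j + 1), (1 - algebraMap (MvPolynomial (Fin (n + 1)) ℚ)
            (FractionRing (MvPolynomial (Fin (n + 1)) ℚ))
            (MvPolynomial.X (Fin.castLE (by omega) i)))) := by
  classical
  set K := FractionRing (MvPolynomial (Fin (n + 1)) ℚ) with hK
  set φ : MvPolynomial (Fin (n + 1)) ℚ →+* K :=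
    (algebraMap (MvPolynomial (Fin (n + 1)) ℚ) K : _ →+* K) with hφ
  set x' : ℕ → K := fun k =>
    if h : k < n + 1 then algebraMap (MvPolynomial (Fin (n + 1)) ℚ) K
      (MvPolynomial.X (⟨k, h⟩ : Fin (n + 1))) else 0 with hx'def
  have hinj : Function.Injective (algebraMap (MvPolynomial (Fin (n + 1)) ℚ) K) :=
    IsFractionRing.injective _ _
  have hXne : ∀ i : Fin (n + 1), (MvPolynomial.X i : MvPolynomial (Fin (n + 1)) ℚ) ≠ 1 := by
    intro i h
    have := congrArg MvPolynomial.constantCoeff h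
    simpa using this
  have hxne : ∀ i, x' i ≠ 1 := by
    intro i
    rw [hx'def]
    dsimp only
    split_ifs with h
    · intro h1
      exact hXne _ (hinj (by simpa using h1))
    · exact fun h1 => one_ne_zero h1.symm
  -- entries of x' for small indices
  have hx'small : ∀ (k : ℕ) (h : k < n + 1),
      x' k = algebraMap (MvPolynomial (Fin (n + 1)) ℚ) K
        (MvPolynomial.X (⟨k, h⟩ : Fin (n + 1))) := by
    intro k h; rw [hx'def]; dsimp only; rw [dif_pos h]
  -- submatrix identification
  have hsub : ∀ (j : ℕ) (hj2 : j ≤ n),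
      ((gassnerMatrix K (fun i => algebraMap (MvPolynomial (Fin (n + 1)) ℚ) K
        (MvPolynomial.X i))).submatrix (Fin.castLE hj2) (Fin.castLE hj2)) = gg x' j := by
    intro j hj2
    ext a b
    have hva : ∀ c : Fin j, x' (c : ℕ) = algebraMap (MvPolynomial (Fin (n + 1)) ℚ) K
        (MvPolynomial.X ((Fin.castLE hj2 c).castSucc)) := by
      intro c
      rw [hx'small (c : ℕ) (by omega)]
      congr 1
    have hvs : ∀ c : Fin j, x' ((c : ℕ) + 1) = algebraMap (MvPolynomial (Fin (n + 1)) ℚ) K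
        (MvPolynomial.X ((Fin.castLE hj2 c).succ)) := by
      intro c
      rw [hx'small ((c : ℕ) + 1) (by omega)]
      congr 1
    rw [Matrix.submatrix_apply, gassnerMatrix, Matrix.of_apply, gg_apply_nat]
    by_cases hab : (a : ℕ) = (b : ℕ)
    · rw [if_pos (show Fin.castLE hj2 a = Fin.castLE hj2 b from Fin.ext hab), if_pos hab,
        hva a, hvs a]
    · rw [if_neg (show ¬(Fin.castLE hj2 a = Fin.castLE hj2 b) from
          fun h => hab (show (a : ℕ) = b from congrArg (fun t : Fin n => (t : ℕ)) h)), if_neg hab]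
      by_cases h2 : (b : ℕ) = (a : ℕ) + 1
      · rw [if_pos (show ((Fin.castLE hj2 b : Fin n) : ℕ) = (Fin.castLE hj2 a : Fin n) + 1
            from h2), if_pos h2, hva b]
      · rw [if_neg (show ¬((Fin.castLE hj2 b : Fin n) : ℕ) = (Fin.castLE hj2 a : Fin n) + 1
            from h2), if_neg h2]
        by_cases h3 : (a : ℕ) = (b : ℕ) + 1
        · rw [if_pos (show ((Fin.castLE hj2 a : Fin n) : ℕ) = (Fin.castLE hj2 b : Fin n) + 1
              from h3), if_pos h3, hva a]
        · rw [if_neg (show ¬((Fin.castLE hj2 a : Fin n) : ℕ) = (Fin.castLE hj2 b : Fin n) + 1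
              from h3), if_neg h3]
  have key := gg_det x' hxne
  -- product conversions
  have hprodx : ∀ (j : ℕ) (hle : j + 1 ≤ n + 1),
      (∏ i ∈ Finset.range (j + 1), x' i) =
        ∏ i : Fin (j + 1), algebraMap (MvPolynomial (Fin (n + 1)) ℚ) K
          (MvPolynomial.X (Fin.castLE hle i)) := by
    intro j hle
    rw [← Fin.prod_univ_eq_prod_range (fun k => x' k) (j + 1)]
    refine Finset.prod_congr rfl fun i _ => ?_
    rw [hx'small (i : ℕ) (by omega)]
    congr 1
  have hprod1x : ∀ (j : ℕ) (hle : j + 1 ≤ n + 1),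
      (∏ i ∈ Finset.range (j + 1), (1 - x' i)) =
        ∏ i : Fin (j + 1), (1 - algebraMap (MvPolynomial (Fin (n + 1)) ℚ) K
          (MvPolynomial.X (Fin.castLE hle i))) := by
    intro j hle
    rw [← Fin.prod_univ_eq_prod_range (fun k => 1 - x' k) (j + 1)]
    refine Finset.prod_congr rfl fun i _ => ?_
    rw [hx'small (i : ℕ) (by omega)]
    congr 2
  constructor
  · have hfull : (gassnerMatrix K (fun i => algebraMap (MvPolynomial (Fin (n + 1)) ℚ) K
        (MvPolynomial.X i))) = gg x' n := by
      rw [← hsub n le_rfl]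
      ext a b
      rfl
    rw [hfull, key n, hprodx n le_rfl, hprod1x n le_rfl]
    have hid : ∀ i : Fin (n + 1), Fin.castLE (show n + 1 ≤ n + 1 by omega) i = i :=
      fun i => rfl
    simp only [hid]
    rfl
  · intro j hj1 hj2
    rw [hsub j hj2, key j, hprodx j (by omega), hprod1x j (by omega)]
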